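/- Equivalently stated in the complement: if H is a triangle-free graph, then the clique cover number of H is at most macodeg(H) + 2. -/

import Mathlib

open SimpleGraph

variable {V : Type*}

/-- The codegree of two vertices: the number of their common neighbors. -/
noncomputable def codeg (H : SimpleGraph V) (u v : V) : ℕ :=
  Nat.card {x : V // H.Adj u x ∧ H.Adj v x}

/-- The maximum codegree `Δ₂`: the maximum of `codeg` over pairs of distinct vertices. -/
noncomputable def maxCodeg (H : SimpleGraph V) : ℕ :=
  sSup {n | ∃ u v : V, u ≠ v ∧ codeg H u v = n}

/-- The anti-codegree: the number of vertices distinct from `u, v` adjacent to neither. -/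
noncomputable def acodeg (H : SimpleGraph V) (u v : V) : ℕ :=
  Nat.card {x : V // x ≠ u ∧ x ≠ v ∧ ¬H.Adj u x ∧ ¬H.Adj v x}

/-- The maximum anti-codegree over pairs of distinct vertices. -/
noncomputable def macodeg (H : SimpleGraph V) : ℕ :=
  sSup {n | ∃ u v : V, u ≠ v ∧ acodeg H u v = n}

/-- A matching, as a set of pairwise vertex-disjoint edges. -/
def IsMatchingSet (H : SimpleGraph V) (M : Finset (Sym2 V)) : Prop :=
  (∀ e ∈ M, e ∈ H.edgeSet) ∧ ∀ e ∈ M, ∀ f ∈ M, e ≠ f → ∀ v : V, v ∈ e → v ∉ f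

/-- The matching number: maximum size of a matching. -/
noncomputable def matchingNumber (H : SimpleGraph V) : ℕ :=
  sSup {n | ∃ M : Finset (Sym2 V), IsMatchingSet H M ∧ M.card = n}

/-- The clique cover number: the least `n` such that `V` can be partitioned into `n` cliques. -/
noncomputable def cliqueCoverNumber (H : SimpleGraph V) : ℕ :=
  sInf {n | ∃ c : V → Fin n, ∀ u v : V, c u = c v → u = v ∨ H.Adj u v}

/-- A graph is claw-free if no neighborhood contains three pairwise nonadjacent vertices. -/
def ClawFree (G : SimpleGraph V) : Prop :=
  ∀ v a b c : V, G.Adj v a → G.Adj v b → G.Adj v c →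
    a ≠ b → a ≠ c → b ≠ c → G.Adj a b ∨ G.Adj a c ∨ G.Adj b c

/-- Maximum edge-codegree `Δ_e`: maximum codegree over pairs of adjacent vertices. -/
noncomputable def maxEdgeCodeg (G : SimpleGraph V) : ℕ :=
  sSup {n | ∃ u v : V, G.Adj u v ∧ codeg G u v = n}

section StmtSixAux

open Finset
set_option linter.unusedSectionVars false
open scoped Classical

variable [Fintype V]

/-- Helper: triangle-freeness as a statement about three mutually adjacent vertices. -/
private lemma stmt6_noTri {H : SimpleGraph V} (hH : H.CliqueFree 3) {a b c : V}
    (hab : H.Adj a b) (hac : H.Adj a c) (hbc : H.Adj b c) : False :=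
  hH {a, b, c} (SimpleGraph.is3Clique_triple_iff.mpr ⟨hab, hac, hbc⟩)

/-- The set of vertices (other than `u, v`) adjacent to `u` or `v`. -/
noncomputable def hitsF (H : SimpleGraph V) (u v : V) : Finset V :=
  Finset.univ.filter (fun x => x ≠ u ∧ x ≠ v ∧ (H.Adj u x ∨ H.Adj v x))

private lemma mem_hitsF {H : SimpleGraph V} {u v x : V} :
    x ∈ hitsF H u v ↔ x ≠ u ∧ x ≠ v ∧ (H.Adj u x ∨ H.Adj v x) := by
  simp [hitsF]

private lemma acodeg_eq_card (H : SimpleGraph V) (u v : V) :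
    acodeg H u v
      = (Finset.univ.filter (fun x => x ≠ u ∧ x ≠ v ∧ ¬H.Adj u x ∧ ¬H.Adj v x)).card := by
  rw [acodeg, Nat.card_eq_fintype_card]
  exact Fintype.card_of_subtype _ (by simp)

private lemma acodeg_le_macodeg {H : SimpleGraph V} {u v : V} (h : u ≠ v) :
    acodeg H u v ≤ macodeg H := by
  apply le_csSup
  · refine ⟨Fintype.card V, ?_⟩
    rintro k ⟨a, b, hab, rfl⟩
    rw [acodeg_eq_card]
    exact le_trans (Finset.card_filter_le _ _) (by rw [Finset.card_univ])
  · exact ⟨u, v, h, rfl⟩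

private lemma acodeg_split {H : SimpleGraph V} {u v : V} (h : u ≠ v) :
    acodeg H u v + (hitsF H u v).card + 2 = Fintype.card V := by
  rw [acodeg_eq_card]
  set A := Finset.univ.filter (fun x => x ≠ u ∧ x ≠ v ∧ ¬H.Adj u x ∧ ¬H.Adj v x) with hA
  have hdis : Disjoint A (hitsF H u v) := by
    rw [Finset.disjoint_left]
    intro x hx1 hx2
    rw [hA, Finset.mem_filter] at hx1
    rw [mem_hitsF] at hx2
    rcases hx2.2.2 with h' | h'
    · exact hx1.2.2.2.1 h'
    · exact hx1.2.2.2.2 h'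
  have hun : A ∪ hitsF H u v = Finset.univ \ {u, v} := by
    ext x
    simp only [hA, hitsF, Finset.mem_union, Finset.mem_filter, Finset.mem_univ, true_and,
      Finset.mem_sdiff, Finset.mem_insert, Finset.mem_singleton]
    tauto
  have h1 := Finset.card_union_of_disjoint hdis
  rw [hun] at h1
  have h2 : (Finset.univ \ ({u, v} : Finset V)).card = Fintype.card V - 2 := by
    rw [Finset.card_sdiff_of_subset (Finset.subset_univ _), Finset.card_univ, Finset.card_pair h]
  have h3 : 2 ≤ Fintype.card V := by
    have := Finset.card_le_univ ({u, v} : Finset V)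
    rwa [Finset.card_pair h] at this
  omega

private lemma hitsF_card_le {H : SimpleGraph V} {u v : V} (h : u ≠ v) :
    (hitsF H u v).card ≤ Fintype.card V - 2 := by
  have := acodeg_split (H := H) h
  omega

/-- Pigeonhole: two pairs with disjoint hit-sets give a pair with few hits. -/
private lemma stmt6_pigeon {H : SimpleGraph V} {u v u' v' : V} (h1 : u ≠ v) (h2 : u' ≠ v')
    (hd : Disjoint (hitsF H u v) (hitsF H u' v')) :
    ∃ a b : V, a ≠ b ∧ (hitsF H a b).card ≤ Fintype.card V / 2 := by
  have hc : (hitsF H u v).card + (hitsF H u' v').card ≤ Fintype.card V := by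
    rw [← Finset.card_union_of_disjoint hd]
    exact Finset.card_le_univ _
  by_cases h : (hitsF H u v).card ≤ Fintype.card V / 2
  · exact ⟨u, v, h1, h⟩
  · exact ⟨u', v', h2, by omega⟩

/-- The key static claim: every triangle-free graph on at least two vertices has a pair of
vertices whose joint neighborhood outside the pair covers at most half of the graph. -/
private lemma stmt6_claimW (H : SimpleGraph V) (hH : H.CliqueFree 3)
    (hn : 2 ≤ Fintype.card V) :
    ∃ a b : V, a ≠ b ∧ (hitsF H a b).card ≤ Fintype.card V / 2 := by
  have noTri : ∀ {a b c : V}, H.Adj a b → H.Adj a c → H.Adj b c → False :=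
    fun hab hac hbc => stmt6_noTri hH hab hac hbc
  by_cases hn4 : Fintype.card V ≤ 4
  · -- tiny case: any pair works
    obtain ⟨u, -, v, -, huv⟩ := Finset.one_lt_card.mp
      (by rw [Finset.card_univ]; omega : 1 < (Finset.univ : Finset V).card)
    exact ⟨u, v, huv, by have := hitsF_card_le (H := H) huv; omega⟩
  push_neg at hn4
  by_cases hC4 : ∃ a b c d : V,
      H.Adj a b ∧ H.Adj b c ∧ H.Adj c d ∧ H.Adj d a ∧ a ≠ c ∧ b ≠ d
  · obtain ⟨a, b, c, d, hab, hbc, hcd, hda, hac, hbd⟩ := hC4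
    apply stmt6_pigeon hac hbd
    rw [Finset.disjoint_left]
    intro z hz1 hz2
    rw [mem_hitsF] at hz1 hz2
    obtain ⟨hza, hzc, h1⟩ := hz1
    obtain ⟨hzb, hzd, h2⟩ := hz2
    rcases h1 with h1 | h1 <;> rcases h2 with h2 | h2
    · exact noTri hab h1 h2
    · exact noTri hda h2 h1
    · exact noTri hbc h2 h1
    · exact noTri hcd h1 h2
  by_cases hC5 : ∃ a b c d e : V,
      H.Adj a b ∧ H.Adj b c ∧ H.Adj c d ∧ H.Adj d e ∧ H.Adj e a ∧
        a ≠ c ∧ a ≠ d ∧ b ≠ d ∧ b ≠ e ∧ c ≠ e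
  · obtain ⟨a, b, c, d, e, hab, hbc, hcd, hde, hea, hac, had, hbd, hbe, hce⟩ := hC5
    apply stmt6_pigeon hab.ne hce
    rw [Finset.disjoint_left]
    intro z hz1 hz2
    rw [mem_hitsF] at hz1 hz2
    obtain ⟨hza, hzb, h1⟩ := hz1
    obtain ⟨hzc, hze, h2⟩ := hz2
    rcases h1 with h1 | h1 <;> rcases h2 with h2 | h2
    · exact hC4 ⟨z, a, b, c, h1.symm, hab, hbc, h2, hzb, hac⟩
    · exact noTri hea h2 h1
    · exact noTri hbc h1 h2
    · exact hC4 ⟨z, b, a, e, h1.symm, hab.symm, hea.symm, h2, hza, hbe⟩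
  by_cases hP4 : ∃ a b c d : V, H.Adj a b ∧ H.Adj b c ∧ H.Adj c d ∧ a ≠ c ∧ a ≠ d ∧ b ≠ d
  · obtain ⟨a, b, c, d, hab, hbc, hcd, hac, had, hbd⟩ := hP4
    apply stmt6_pigeon hab.ne hcd.ne
    rw [Finset.disjoint_left]
    intro z hz1 hz2
    rw [mem_hitsF] at hz1 hz2
    obtain ⟨hza, hzb, h1⟩ := hz1
    obtain ⟨hzc, hzd, h2⟩ := hz2
    rcases h1 with h1 | h1 <;> rcases h2 with h2 | h2
    · exact hC4 ⟨z, a, b, c, h1.symm, hab, hbc, h2, hzb, hac⟩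
    · exact hC5 ⟨z, a, b, c, d, h1.symm, hab, hbc, hcd, h2, hzb, hzc, hac, had, hbd⟩
    · exact noTri hbc h1 h2
    · exact hC4 ⟨z, b, c, d, h1.symm, hbc, hcd, h2, hzc, hbd⟩
  -- no P4: union of stars
  by_cases hE : ∃ a b : V, H.Adj a b
  · obtain ⟨a0, b0, hab0⟩ := hE
    -- find an edge (a, b) where b is a leaf
    obtain ⟨a, b, hab, hleaf⟩ : ∃ a b : V, H.Adj a b ∧ ∀ y : V, H.Adj b y → y = a := by
      by_cases hA : ∃ x : V, H.Adj a0 x ∧ x ≠ b0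
      · obtain ⟨x, hax, hxb⟩ := hA
        refine ⟨a0, b0, hab0, ?_⟩
        intro y hy
        by_contra hya
        have hxy : x ≠ y := by
          intro hxy
          subst hxy
          exact noTri hab0 hax hy
        exact hP4 ⟨x, a0, b0, y, hax.symm, hab0, hy, hxb, hxy, fun h => hya h.symm⟩
      · push_neg at hA
        exact ⟨b0, a0, hab0.symm, fun y hy => hA y hy⟩
    -- find a vertex outside {a, b} with at most one neighbor
    obtain ⟨z, hza, hzb, hzdeg⟩ :
        ∃ z : V, z ≠ a ∧ z ≠ b ∧ ∀ w w' : V, H.Adj z w → H.Adj z w' → w = w' := by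
      by_contra hall
      push_neg at hall
      -- hall : ∀ z, z ≠ a → z ≠ b → ∃ w w', Adj z w ∧ Adj z w' ∧ w ≠ w'
      have hz0 : ∃ z0 : V, z0 ≠ a ∧ z0 ≠ b := by
        have hne : (Finset.univ \ ({a, b} : Finset V)).Nonempty := by
          apply Finset.card_pos.mp
          rw [Finset.card_sdiff_of_subset (Finset.subset_univ _), Finset.card_univ]
          have : ({a, b} : Finset V).card ≤ 2 := Finset.card_insert_le _ _ |>.trans (by simp)
          omega
        obtain ⟨z0, hz0⟩ := hne
        rw [Finset.mem_sdiff] at hz0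
        simp only [Finset.mem_insert, Finset.mem_singleton] at hz0
        exact ⟨z0, fun h => hz0.2 (Or.inl h), fun h => hz0.2 (Or.inr h)⟩
      obtain ⟨z0, hz0a, hz0b⟩ := hz0
      obtain ⟨w, w', hw, hw', hww⟩ := hall z0 hz0a hz0b
      have hwb : w ≠ b := by
        intro h; subst h
        exact hz0a (hleaf z0 hw.symm)
      have hw'b : w' ≠ b := by
        intro h; subst h
        exact hz0a (hleaf z0 hw'.symm)
      -- select a neighbor of z0 distinct from a and b, keeping the other one
      obtain ⟨w1, w2, hw1, hw2, h12, hw1a, hw1b⟩ :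
          ∃ w1 w2 : V, H.Adj z0 w1 ∧ H.Adj z0 w2 ∧ w1 ≠ w2 ∧ w1 ≠ a ∧ w1 ≠ b := by
        by_cases hwa : w = a
        · subst hwa
          exact ⟨w', w, hw', hw, hww.symm, fun h => hww h.symm, hw'b⟩
        · exact ⟨w, w', hw, hw', hww, hwa, hwb⟩
      obtain ⟨v1, v2, hv1, hv2, hv12⟩ := hall w1 hw1a hw1b
      obtain ⟨v0, hv0, hv0z⟩ : ∃ v0 : V, H.Adj w1 v0 ∧ v0 ≠ z0 := by
        by_cases h : v1 = z0
        · subst h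
          exact ⟨v2, hv2, fun h => hv12 h.symm⟩
        · exact ⟨v1, hv1, h⟩
      by_cases hvw2 : v0 = w2
      · subst hvw2
        exact noTri hw1 hw2 hv0
      · exact hP4 ⟨v0, w1, z0, w2, hv0.symm, hw1.symm, hw2, hv0z, hvw2, h12⟩
    refine ⟨b, z, fun h => hzb h.symm, ?_⟩
    have hsub : hitsF H b z ⊆ insert a (Finset.univ.filter (fun y => H.Adj z y)) := by
      intro y hy
      rw [mem_hitsF] at hy
      rcases hy.2.2 with h' | h'
      · exact Finset.mem_insert.mpr (Or.inl (hleaf y h'))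
      · exact Finset.mem_insert.mpr (Or.inr (by simp [h']))
    have hfil : (Finset.univ.filter (fun y => H.Adj z y)).card ≤ 1 := by
      apply Finset.card_le_one.mpr
      intro y hy y' hy'
      simp only [Finset.mem_filter] at hy hy'
      exact hzdeg y y' hy.2 hy'.2
    have := Finset.card_le_card hsub
    have hins := Finset.card_insert_le a (Finset.univ.filter (fun y => H.Adj z y))
    omega
  · -- no edges at all
    push_neg at hE
    obtain ⟨u, -, v, -, huv⟩ := Finset.one_lt_card.mp
      (by rw [Finset.card_univ]; omega : 1 < (Finset.univ : Finset V).card)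
    refine ⟨u, v, huv, ?_⟩
    have : hitsF H u v = ∅ := by
      ext x
      rw [mem_hitsF]
      simp only [Finset.notMem_empty, iff_false]
      rintro ⟨-, -, h | h⟩ <;> exact hE _ _ h
    rw [this]
    simp

/-! ### Matchings as finsets of ordered pairs -/

/-- A matching given by a finset of ordered pairs. -/
def IsPairMatching (H : SimpleGraph V) (M : Finset (V × V)) : Prop :=
  (∀ p ∈ M, H.Adj p.1 p.2) ∧
    ∀ p ∈ M, ∀ q ∈ M, p ≠ q → p.1 ≠ q.1 ∧ p.1 ≠ q.2 ∧ p.2 ≠ q.1 ∧ p.2 ≠ q.2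

private lemma exists_max_matching (H : SimpleGraph V) :
    ∃ M : Finset (V × V), IsPairMatching H M ∧
      ∀ M' : Finset (V × V), IsPairMatching H M' → M'.card ≤ M.card := by
  have hne : ((Finset.univ : Finset (Finset (V × V))).filter
      (fun M => IsPairMatching H M)).Nonempty := by
    refine ⟨∅, ?_⟩
    simp only [Finset.mem_filter, Finset.mem_univ, true_and]
    exact ⟨fun p hp => absurd hp (Finset.notMem_empty p),
      fun p hp => absurd hp (Finset.notMem_empty p)⟩
  obtain ⟨M, hM, hmax⟩ := Finset.exists_max_image _ Finset.card hne
  rw [Finset.mem_filter] at hM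
  refine ⟨M, hM.2, fun M' h => hmax M' ?_⟩
  simp only [Finset.mem_filter, Finset.mem_univ, true_and]
  exact h

/-- The set of matched vertices. -/
noncomputable def pairVerts (M : Finset (V × V)) : Finset V :=
  M.biUnion (fun p => {p.1, p.2})

private lemma mem_pairVerts {M : Finset (V × V)} {x : V} :
    x ∈ pairVerts M ↔ ∃ p ∈ M, x = p.1 ∨ x = p.2 := by
  simp [pairVerts]

private lemma card_pairVerts {H : SimpleGraph V} {M : Finset (V × V)}
    (hM : IsPairMatching H M) : (pairVerts M).card = 2 * M.card := by
  rw [pairVerts, Finset.card_biUnion]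
  · rw [Finset.sum_congr rfl (fun p hp => Finset.card_pair (hM.1 p hp).ne),
      Finset.sum_const, smul_eq_mul, mul_comm]
  · intro p hp q hq hpq
    rw [Function.onFun, Finset.disjoint_left]
    intro x hx1 hx2
    simp only [Finset.mem_insert, Finset.mem_singleton] at hx1 hx2
    obtain ⟨h1, h2, h3, h4⟩ := hM.2 p hp q hq hpq
    rcases hx1 with rfl | rfl <;> rcases hx2 with h | h
    · exact h1 h
    · exact h2 h
    · exact h3 h
    · exact h4 h

private lemma pair_endpoint_mem {M : Finset (V × V)} {p : V × V} (hp : p ∈ M) :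
    p.1 ∈ pairVerts M ∧ p.2 ∈ pairVerts M :=
  ⟨mem_pairVerts.mpr ⟨p, hp, Or.inl rfl⟩, mem_pairVerts.mpr ⟨p, hp, Or.inr rfl⟩⟩

/-- No augmenting edge between two exposed vertices. -/
private lemma no_augment {H : SimpleGraph V} {M : Finset (V × V)}
    (hM : IsPairMatching H M)
    (hmax : ∀ M' : Finset (V × V), IsPairMatching H M' → M'.card ≤ M.card)
    {u v : V} (hu : u ∉ pairVerts M) (hv : v ∉ pairVerts M)
    (hadj : H.Adj u v) : False := by
  have hnm : (u, v) ∉ M := fun h => hu (pair_endpoint_mem h).1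
  have hM' : IsPairMatching H (insert (u, v) M) := by
    constructor
    · intro p hp
      rcases Finset.mem_insert.mp hp with rfl | hp
      · exact hadj
      · exact hM.1 p hp
    · intro p hp q hq hpq
      rcases Finset.mem_insert.mp hp with rfl | hp <;>
        rcases Finset.mem_insert.mp hq with h | hq
      · exact absurd h.symm hpq
      · refine ⟨?_, ?_, ?_, ?_⟩ <;> intro h
        · exact hu (by rw [show u = q.1 from h]; exact (pair_endpoint_mem hq).1)
        · exact hu (by rw [show u = q.2 from h]; exact (pair_endpoint_mem hq).2)
        · exact hv (by rw [show v = q.1 from h]; exact (pair_endpoint_mem hq).1)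
        · exact hv (by rw [show v = q.2 from h]; exact (pair_endpoint_mem hq).2)
      · subst h
        refine ⟨?_, ?_, ?_, ?_⟩ <;> intro h
        · exact hu (by rw [← show p.1 = u from h]; exact (pair_endpoint_mem hp).1)
        · exact hv (by rw [← show p.1 = v from h]; exact (pair_endpoint_mem hp).1)
        · exact hu (by rw [← show p.2 = u from h]; exact (pair_endpoint_mem hp).2)
        · exact hv (by rw [← show p.2 = v from h]; exact (pair_endpoint_mem hp).2)
      · exact hM.2 p hp q hq hpq
  have := hmax _ hM'
  rw [Finset.card_insert_of_notMem hnm] at this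
  omega

/-- Helper: symmetric flip of the disjointness conditions. -/
private lemma flip_distinct {p q : V × V}
    (h : p.1 ≠ q.1 ∧ p.1 ≠ q.2 ∧ p.2 ≠ q.1 ∧ p.2 ≠ q.2) :
    q.1 ≠ p.1 ∧ q.1 ≠ p.2 ∧ q.2 ≠ p.1 ∧ q.2 ≠ p.2 :=
  ⟨h.1.symm, h.2.2.1.symm, h.2.1.symm, h.2.2.2.symm⟩

/-- No swap augmentation: two exposed vertices adjacent to the two endpoints of a
matching edge. -/
private lemma no_swap {H : SimpleGraph V} {M : Finset (V × V)}
    (hM : IsPairMatching H M)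
    (hmax : ∀ M' : Finset (V × V), IsPairMatching H M' → M'.card ≤ M.card)
    {u v : V} {p : V × V} (hp : p ∈ M)
    (hu : u ∉ pairVerts M) (hv : v ∉ pairVerts M) (huv : u ≠ v)
    (h1 : H.Adj u p.1) (h2 : H.Adj v p.2) : False := by
  classical
  set M' := insert (u, p.1) (insert (v, p.2) (M.erase p)) with hM'def
  have hadjp := hM.1 p hp
  have hup1 : u ≠ p.1 := fun h => hu (by rw [h]; exact (pair_endpoint_mem hp).1)
  have hup2 : u ≠ p.2 := fun h => hu (by rw [h]; exact (pair_endpoint_mem hp).2)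
  have hvp1 : v ≠ p.1 := fun h => hv (by rw [h]; exact (pair_endpoint_mem hp).1)
  have hvp2 : v ≠ p.2 := fun h => hv (by rw [h]; exact (pair_endpoint_mem hp).2)
  -- facts about elements of M.erase p
  have herase : ∀ q ∈ M.erase p, q ∈ M ∧ q ≠ p := fun q hq =>
    ⟨Finset.mem_of_mem_erase hq, Finset.ne_of_mem_erase hq⟩
  have hq_facts : ∀ q ∈ M.erase p,
      q.1 ≠ u ∧ q.1 ≠ v ∧ q.2 ≠ u ∧ q.2 ≠ v ∧
      q.1 ≠ p.1 ∧ q.1 ≠ p.2 ∧ q.2 ≠ p.1 ∧ q.2 ≠ p.2 := by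
    intro q hq
    obtain ⟨hqM, hqp⟩ := herase q hq
    obtain ⟨a1, a2, a3, a4⟩ := hM.2 q hqM p hp hqp
    refine ⟨?_, ?_, ?_, ?_, a1, a2, a3, a4⟩
    · exact fun h => hu (by rw [← h]; exact (pair_endpoint_mem hqM).1)
    · exact fun h => hv (by rw [← h]; exact (pair_endpoint_mem hqM).1)
    · exact fun h => hu (by rw [← h]; exact (pair_endpoint_mem hqM).2)
    · exact fun h => hv (by rw [← h]; exact (pair_endpoint_mem hqM).2)
  have hn1 : (v, p.2) ∉ M.erase p := by
    intro h
    exact ((hq_facts _ h).2.1) rfl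
  have hn2 : (u, p.1) ∉ insert (v, p.2) (M.erase p) := by
    intro h
    rcases Finset.mem_insert.mp h with h | h
    · exact huv (congrArg Prod.fst h)
    · exact ((hq_facts _ h).1) rfl
  have hM'' : IsPairMatching H M' := by
    constructor
    · intro q hq
      rw [hM'def] at hq
      rcases Finset.mem_insert.mp hq with rfl | hq
      · exact h1
      rcases Finset.mem_insert.mp hq with rfl | hq
      · exact h2
      · exact hM.1 q (herase q hq).1
    · have key : ∀ a ∈ M', ∀ b ∈ M', a ≠ b →
          ((a = (u, p.1) ∧ b = (v, p.2)) ∨ (a = (u, p.1) ∧ b ∈ M.erase p) ∨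
           (a = (v, p.2) ∧ b = (u, p.1)) ∨ (a = (v, p.2) ∧ b ∈ M.erase p) ∨
           (a ∈ M.erase p ∧ b = (u, p.1)) ∨ (a ∈ M.erase p ∧ b = (v, p.2)) ∨
           (a ∈ M.erase p ∧ b ∈ M.erase p)) := by
        intro a ha b hb hab
        rw [hM'def] at ha hb
        rcases Finset.mem_insert.mp ha with rfl | ha
        · rcases Finset.mem_insert.mp hb with h | hb
          · exact absurd h.symm hab
          · rcases Finset.mem_insert.mp hb with rfl | hb
            · exact Or.inl ⟨rfl, rfl⟩
            · exact Or.inr (Or.inl ⟨rfl, hb⟩)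
        · rcases Finset.mem_insert.mp ha with rfl | ha
          · rcases Finset.mem_insert.mp hb with rfl | hb
            · exact Or.inr (Or.inr (Or.inl ⟨rfl, rfl⟩))
            · rcases Finset.mem_insert.mp hb with h | hb
              · exact absurd h.symm hab
              · exact Or.inr (Or.inr (Or.inr (Or.inl ⟨rfl, hb⟩)))
          · rcases Finset.mem_insert.mp hb with rfl | hb
            · exact Or.inr (Or.inr (Or.inr (Or.inr (Or.inl ⟨ha, rfl⟩))))
            · rcases Finset.mem_insert.mp hb with rfl | hb
              · exact Or.inr (Or.inr (Or.inr (Or.inr (Or.inr (Or.inl ⟨ha, rfl⟩)))))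
              · exact Or.inr (Or.inr (Or.inr (Or.inr (Or.inr (Or.inr ⟨ha, hb⟩)))))
      intro a ha b hb hab
      rcases key a ha b hb hab with ⟨rfl, rfl⟩ | ⟨rfl, hb'⟩ | ⟨rfl, rfl⟩ | ⟨rfl, hb'⟩ |
        ⟨ha', rfl⟩ | ⟨ha', rfl⟩ | ⟨ha', hb'⟩
      · exact ⟨huv, hup2, hvp1.symm, hadjp.ne⟩
      · obtain ⟨b1, b2, b3, b4, b5, b6, b7, b8⟩ := hq_facts _ hb'
        exact ⟨b1.symm, b3.symm, b5.symm, b7.symm⟩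
      · exact ⟨huv.symm, hvp1, hup2.symm, hadjp.ne.symm⟩
      · obtain ⟨b1, b2, b3, b4, b5, b6, b7, b8⟩ := hq_facts _ hb'
        exact ⟨b2.symm, b4.symm, b6.symm, b8.symm⟩
      · obtain ⟨b1, b2, b3, b4, b5, b6, b7, b8⟩ := hq_facts _ ha'
        exact ⟨b1, b5, b3, b7⟩
      · obtain ⟨b1, b2, b3, b4, b5, b6, b7, b8⟩ := hq_facts _ ha'
        exact ⟨b2, b6, b4, b8⟩
      · have hab' : a ≠ b := hab
        exact hM.2 a (herase a ha').1 b (herase b hb').1 hab'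
  have hcard : M'.card = M.card + 1 := by
    rw [hM'def, Finset.card_insert_of_notMem hn2, Finset.card_insert_of_notMem hn1,
      Finset.card_erase_of_mem hp]
    have : 0 < M.card := Finset.card_pos.mpr ⟨p, hp⟩
    omega
  have := hmax _ hM''
  omega

/-- The deficiency ≥ 2 case: two exposed vertices have few joint hits. -/
private lemma def2_hits {H : SimpleGraph V} (hH : H.CliqueFree 3) {M : Finset (V × V)}
    (hM : IsPairMatching H M)
    (hmax : ∀ M' : Finset (V × V), IsPairMatching H M' → M'.card ≤ M.card)
    {u v : V} (hu : u ∉ pairVerts M) (hv : v ∉ pairVerts M) (huv : u ≠ v) :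
    (hitsF H u v).card ≤ M.card := by
  classical
  have hmatched : ∀ z ∈ hitsF H u v, ∃ p ∈ M, z = p.1 ∨ z = p.2 := by
    intro z hz
    rw [mem_hitsF] at hz
    by_contra hnm
    have hzW : z ∉ pairVerts M := fun h => hnm (mem_pairVerts.mp h)
    rcases hz.2.2 with h | h
    · exact no_augment hM hmax hu hzW h
    · exact no_augment hM hmax hv hzW h
  set f : V → V × V := fun z =>
    if h : ∃ p ∈ M, z = p.1 ∨ z = p.2 then h.choose else (z, z) with hfdef
  have hf : ∀ z ∈ hitsF H u v, f z ∈ M ∧ (z = (f z).1 ∨ z = (f z).2) := by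
    intro z hz
    have h := hmatched z hz
    rw [hfdef]
    simp only [dif_pos h]
    exact ⟨h.choose_spec.1, h.choose_spec.2⟩
  apply Finset.card_le_card_of_injOn f (fun z hz => (hf z hz).1)
  intro z hz z' hz' heq
  rw [Finset.mem_coe] at hz hz'
  by_contra hne
  obtain ⟨hp0, hzp0⟩ := hf z hz
  obtain ⟨hp0', hzp0'⟩ := hf z' hz'
  rw [heq] at hzp0
  obtain ⟨p, hp', hzp, hzp'⟩ :
      ∃ p, p ∈ M ∧ (z = p.1 ∨ z = p.2) ∧ (z' = p.1 ∨ z' = p.2) :=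
    ⟨f z', hp0', hzp0, hzp0'⟩
  have hadj : H.Adj z z' := by
    rcases hzp with ha | ha <;> rcases hzp' with hb | hb
    · exact absurd (ha.trans hb.symm) hne
    · rw [ha, hb]; exact hM.1 _ hp'
    · rw [ha, hb]; exact (hM.1 _ hp').symm
    · exact absurd (ha.trans hb.symm) hne
  rw [mem_hitsF] at hz hz'
  rcases hz.2.2 with h1 | h1 <;> rcases hz'.2.2 with h2 | h2
  · exact stmt6_noTri hH h1 h2 hadj
  · rcases hzp with ha | ha <;> rcases hzp' with hb | hb
    · exact hne (ha.trans hb.symm)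
    · exact no_swap hM hmax hp' hu hv huv (ha ▸ h1) (hb ▸ h2)
    · exact no_swap hM hmax hp' hv hu huv.symm (hb ▸ h2) (ha ▸ h1)
    · exact hne (ha.trans hb.symm)
  · rcases hzp with ha | ha <;> rcases hzp' with hb | hb
    · exact hne (ha.trans hb.symm)
    · exact no_swap hM hmax hp' hv hu huv.symm (ha ▸ h1) (hb ▸ h2)
    · exact no_swap hM hmax hp' hu hv huv (hb ▸ h2) (ha ▸ h1)
    · exact hne (ha.trans hb.symm)
  · exact stmt6_noTri hH h1 h2 hadj

end StmtSixAux

/-- If `H` is triangle-free, then the clique cover number of `H` is at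
most `macodeg(H) + 2`. -/
theorem stmt_6 [Fintype V] (H : SimpleGraph V) (hH : H.CliqueFree 3) :
    cliqueCoverNumber H ≤ macodeg H + 2 := by
  classical
  by_cases hsmall : Fintype.card V ≤ 1
  · apply Nat.sInf_le
    refine ⟨fun _ => ⟨0, by omega⟩, fun u v _ => Or.inl ?_⟩
    exact Fintype.card_le_one_iff.mp hsmall u v
  · push_neg at hsmall
    obtain ⟨M, hM, hmax⟩ := exists_max_matching H
    have hWuniv : (pairVerts M).card ≤ Fintype.card V := by
      rw [← Finset.card_univ]; exact Finset.card_le_univ _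
    have hWcard := card_pairVerts hM
    -- find a good pair
    obtain ⟨u, v, huv, hhits⟩ : ∃ u v : V, u ≠ v ∧ (hitsF H u v).card ≤ M.card := by
      by_cases hdef : 2 ≤ (Finset.univ \ pairVerts M).card
      · obtain ⟨u, hu, v, hv, huv⟩ := Finset.one_lt_card.mp
          (show 1 < (Finset.univ \ pairVerts M).card by omega)
        rw [Finset.mem_sdiff] at hu hv
        exact ⟨u, v, huv, def2_hits hH hM hmax hu.2 hv.2 huv⟩
      · have hsd : (Finset.univ \ pairVerts M).card
            = Fintype.card V - (pairVerts M).card := by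
          rw [Finset.card_sdiff_of_subset (Finset.subset_univ _), Finset.card_univ]
        have hν : Fintype.card V / 2 ≤ M.card := by omega
        obtain ⟨a, b, hab, h⟩ := stmt6_claimW H hH hsmall
        exact ⟨a, b, hab, le_trans h hν⟩
    -- the coloring
    set c1 : V → (V × V) ⊕ V := fun x =>
      if h : ∃ p ∈ M, x = p.1 ∨ x = p.2 then Sum.inl h.choose else Sum.inr x with hc1
    have hprop : ∀ x y : V, c1 x = c1 y → x = y ∨ H.Adj x y := by
      intro x y h
      by_cases hx : ∃ p ∈ M, x = p.1 ∨ x = p.2 <;>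
        by_cases hy : ∃ p ∈ M, y = p.1 ∨ y = p.2 <;>
        rw [hc1] at h <;> simp only [dif_pos, dif_neg, hx, hy] at h
      · rw [Sum.inl.injEq] at h
        obtain ⟨p, hpM, hxp, hyp⟩ :
            ∃ p, p ∈ M ∧ (x = p.1 ∨ x = p.2) ∧ (y = p.1 ∨ y = p.2) :=
          ⟨hy.choose, hy.choose_spec.1, h ▸ hx.choose_spec.2, hy.choose_spec.2⟩
        rcases hxp with ha | ha <;> rcases hyp with hb | hb
        · exact Or.inl (ha.trans hb.symm)
        · exact Or.inr (by rw [ha, hb]; exact hM.1 _ hpM)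
        · exact Or.inr (by rw [ha, hb]; exact (hM.1 _ hpM).symm)
        · exact Or.inl (ha.trans hb.symm)
      · exact absurd h (by simp)
      · exact absurd h (by simp)
      · exact Or.inl (Sum.inr.injEq .. ▸ h)
    have himg : (Finset.univ.image c1).card ≤ M.card + (Finset.univ \ pairVerts M).card := by
      have hsub : Finset.univ.image c1 ⊆
          M.image Sum.inl ∪ (Finset.univ \ pairVerts M).image Sum.inr := by
        intro s hs
        obtain ⟨x, -, rfl⟩ := Finset.mem_image.mp hs
        by_cases hx : ∃ p ∈ M, x = p.1 ∨ x = p.2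
        · apply Finset.mem_union_left
          rw [hc1]
          simp only [dif_pos hx]
          exact Finset.mem_image_of_mem _ hx.choose_spec.1
        · apply Finset.mem_union_right
          rw [hc1]
          simp only [dif_neg hx]
          apply Finset.mem_image_of_mem
          rw [Finset.mem_sdiff]
          exact ⟨Finset.mem_univ x, fun h => hx (mem_pairVerts.mp h)⟩
      calc (Finset.univ.image c1).card
          ≤ (M.image Sum.inl ∪ (Finset.univ \ pairVerts M).image Sum.inr).card :=
            Finset.card_le_card hsub
        _ ≤ (M.image Sum.inl).card + ((Finset.univ \ pairVerts M).image Sum.inr).card :=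
            Finset.card_union_le _ _
        _ ≤ M.card + (Finset.univ \ pairVerts M).card :=
            Nat.add_le_add (Finset.card_image_le) (Finset.card_image_le)
    have hsd : (Finset.univ \ pairVerts M).card
        = Fintype.card V - (pairVerts M).card := by
      rw [Finset.card_sdiff_of_subset (Finset.subset_univ _), Finset.card_univ]
    have hsplit := acodeg_split (H := H) huv
    have hmac := acodeg_le_macodeg (H := H) huv
    have hm2 : (Finset.univ.image c1).card ≤ macodeg H + 2 := by omega
    have hmem : (Finset.univ.image c1).card ∈
        {n | ∃ c : V → Fin n, ∀ u v : V, c u = c v → u = v ∨ H.Adj u v} := by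
      refine ⟨fun x => (Finset.univ.image c1).equivFin
        ⟨c1 x, Finset.mem_image_of_mem _ (Finset.mem_univ x)⟩, ?_⟩
      intro x y h
      apply hprop
      have := (Finset.univ.image c1).equivFin.injective h
      exact Subtype.ext_iff.mp this
    exact le_trans (Nat.sInf_le hmem) hm2
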